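/- arXiv:1511.01798 — 8 statements merged into one kernel-verified Lean document; each statement's English description precedes it below -/
import Mathlib

section
/- There exist a constant M_j ≥ 0 independent of s and an integer s_j ≥ 1 such that for all integers s ≥ s_j, |R_s(γ*_s) − R_s(γ_{j,s})| ≤ q_s · M_j / s^{(j+1)/2}. -/
open Set Finset

/-- Optimality gap in objective value (Theorem 1, first claim). -/
theorem stmt_0 (j : ℕ) (γl γr : ℝ) (hlr : γl < γr)
    (Rs : ℕ → ℝ → ℝ) (ns qs : ℕ → ℝ) (hq : ∀ s : ℕ, 1 ≤ s → 0 < qs s)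
    (R : ℕ → ℝ → ℝ)
    (hRdiff : ∀ i ≤ j, ∀ γ ∈ Icc γl γr,
      DifferentiableAt ℝ (R i) γ ∧ DifferentiableAt ℝ (deriv (R i)) γ)
    (hRbdd : ∀ i ≤ j, ∃ B : ℝ, ∀ γ ∈ Icc γl γr,
      |R i γ| ≤ B ∧ |deriv (R i) γ| ≤ B ∧ |deriv (deriv (R i)) γ| ≤ B)
    (hRj1diff : ∀ γ ∈ Icc γl γr, DifferentiableAt ℝ (R (j + 1)) γ)
    (hRj1bdd : ∃ B : ℝ, ∀ γ ∈ Icc γl γr,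
      |R (j + 1) γ| ≤ B ∧ |deriv (R (j + 1)) γ| ≤ B)
    (hRsdiff : ∀ s : ℕ, 1 ≤ s → ∀ γ ∈ Icc γl γr, DifferentiableAt ℝ (Rs s) γ)
    (C : ℝ)
    (happrox : ∀ s : ℕ, 1 ≤ s → ∀ γ ∈ Icc γl γr,
      |Rs s γ - ns s - qs s * ∑ i ∈ Finset.range (j + 2), R i γ / Real.sqrt s ^ i|
        ≤ C * qs s / Real.sqrt s ^ (j + 2) ∧
      |deriv (Rs s) γ - qs s * ∑ i ∈ Finset.range (j + 2), deriv (R i) γ / Real.sqrt s ^ i|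
        ≤ C * qs s / Real.sqrt s ^ (j + 2))
    (hR0cont : ContinuousOn (deriv (deriv (R 0))) (Icc γl γr))
    (hR0neg : ∀ γ ∈ Icc γl γr, deriv (deriv (R 0)) γ < 0)
    (γ0 : ℝ) (hγ0 : γ0 ∈ Ioo γl γr)
    (hγ0max : IsMaxOn (R 0) (Icc γl γr) γ0)
    (hγ0uniq : ∀ γ ∈ Icc γl γr, IsMaxOn (R 0) (Icc γl γr) γ → γ = γ0)
    (γstar : ℕ → ℝ)
    (hγstar : ∀ s : ℕ, 1 ≤ s → γstar s ∈ Ioo γl γr ∧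
      IsMaxOn (Rs s) (Icc γl γr) (γstar s) ∧
      ∀ γ ∈ Icc γl γr, IsMaxOn (Rs s) (Icc γl γr) γ → γ = γstar s)
    (γj : ℕ → ℝ) (s1 : ℕ)
    (hγj : ∀ s : ℕ, s1 ≤ s → γj s ∈ Icc γl γr ∧
      IsMaxOn (fun γ => ∑ i ∈ Finset.range (j + 1), R i γ / Real.sqrt s ^ i)
        (Icc γl γr) (γj s) ∧
      ∀ γ ∈ Icc γl γr,
        IsMaxOn (fun γ' => ∑ i ∈ Finset.range (j + 1), R i γ' / Real.sqrt s ^ i)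
          (Icc γl γr) γ → γ = γj s) :
    ∃ (M : ℝ) (sj : ℕ), 0 ≤ M ∧ 1 ≤ sj ∧ ∀ s : ℕ, sj ≤ s →
      |Rs s (γstar s) - Rs s (γj s)| ≤ qs s * M / Real.sqrt s ^ (j + 1) := by
  obtain ⟨B, hB⟩ := hRj1bdd
  have hγlm : γl ∈ Icc γl γr := ⟨le_rfl, hlr.le⟩
  have hq1 : (0:ℝ) < qs 1 := hq 1 le_rfl
  have hB0 : 0 ≤ B := (abs_nonneg _).trans (hB γl hγlm).1
  have hC0 : 0 ≤ C := by
    have h := (happrox 1 le_rfl γl hγlm).1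
    have hs1 : Real.sqrt ((1:ℕ):ℝ) = 1 := by norm_num
    rw [hs1] at h
    simp only [one_pow, div_one] at h
    have h0 := (abs_nonneg _).trans h
    nlinarith
  refine ⟨2 * (C + B), max s1 1, by positivity, le_max_right _ _, ?_⟩
  intro s hs
  have hs1' : s1 ≤ s := le_trans (le_max_left _ _) hs
  have hss : 1 ≤ s := le_trans (le_max_right _ _) hs
  have hqs : 0 < qs s := hq s hss
  have hsr : (1:ℝ) ≤ Real.sqrt s := by
    rw [show (1:ℝ) = Real.sqrt 1 by simp]
    exact Real.sqrt_le_sqrt (by exact_mod_cast hss)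
  have hp1 : (0:ℝ) < Real.sqrt s ^ (j + 1) := by positivity
  have hp2 : (0:ℝ) < Real.sqrt s ^ (j + 2) := by positivity
  have hple : Real.sqrt s ^ (j + 1) ≤ Real.sqrt s ^ (j + 2) :=
    pow_le_pow_right₀ hsr (by omega)
  set S : ℝ → ℝ := fun γ => ∑ i ∈ Finset.range (j + 1), R i γ / Real.sqrt s ^ i with hS
  have hebound : ∀ γ ∈ Icc γl γr,
      |Rs s γ - ns s - qs s * S γ| ≤ (C + B) * qs s / Real.sqrt s ^ (j + 1) := by
    intro γ hγ
    have h1 := (happrox s hss γ hγ).1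
    have hsum : (∑ i ∈ Finset.range (j + 2), R i γ / Real.sqrt s ^ i)
        = S γ + R (j + 1) γ / Real.sqrt s ^ (j + 1) := Finset.sum_range_succ _ _
    have heq : Rs s γ - ns s - qs s * S γ
        = (Rs s γ - ns s - qs s * ∑ i ∈ Finset.range (j + 2), R i γ / Real.sqrt s ^ i)
          + qs s * (R (j + 1) γ / Real.sqrt s ^ (j + 1)) := by
      rw [hsum]; ring
    rw [heq]
    calc |_ + _| ≤ |Rs s γ - ns s - qs s * ∑ i ∈ Finset.range (j + 2), R i γ / Real.sqrt s ^ i|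
          + |qs s * (R (j + 1) γ / Real.sqrt s ^ (j + 1))| := abs_add_le _ _
      _ ≤ C * qs s / Real.sqrt s ^ (j + 2) + qs s * (B / Real.sqrt s ^ (j + 1)) := by
          gcongr
          · rw [abs_mul, abs_of_pos hqs, abs_div, abs_of_pos hp1]
            gcongr
            exact (hB γ hγ).1
      _ ≤ C * qs s / Real.sqrt s ^ (j + 1) + qs s * (B / Real.sqrt s ^ (j + 1)) := by
          gcongr
      _ = (C + B) * qs s / Real.sqrt s ^ (j + 1) := by ring
  obtain ⟨hγ1o, hγ1max, -⟩ := hγstar s hss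
  obtain ⟨hγ2m, hγ2max, -⟩ := hγj s hs1'
  have hγ1m : γstar s ∈ Icc γl γr := Ioo_subset_Icc_self hγ1o
  have hmax1 : Rs s (γj s) ≤ Rs s (γstar s) := hγ1max hγ2m
  have hmax2 : S (γstar s) ≤ S (γj s) := hγ2max hγ1m
  have he1 := hebound _ hγ1m
  have he2 := hebound _ hγ2m
  rw [abs_of_nonneg (sub_nonneg.mpr hmax1)]
  rw [abs_le] at he1 he2
  have key : Rs s (γstar s) - Rs s (γj s)
      = (Rs s (γstar s) - ns s - qs s * S (γstar s))
        - (Rs s (γj s) - ns s - qs s * S (γj s))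
        + qs s * (S (γstar s) - S (γj s)) := by ring
  have hlast : qs s * (S (γstar s) - S (γj s)) ≤ 0 :=
    mul_nonpos_of_nonneg_of_nonpos hqs.le (by linarith)
  rw [key]
  have : (C + B) * qs s / Real.sqrt s ^ (j + 1) + (C + B) * qs s / Real.sqrt s ^ (j + 1)
      = qs s * (2 * (C + B)) / Real.sqrt s ^ (j + 1) := by ring
  linarith [he1.2, he2.1]
end

section
/- There exist a constant K_j ≥ 0 independent of s and an integer s_j ≥ 1 such that for all integers s ≥ s_j, |γ_{j,s} − γ*_s| ≤ K_j / s^{(j+1)/2}. -/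
open Set Finset

private lemma foc_aux {f : ℝ → ℝ} {γl γr a b f' : ℝ} (hmax : IsMaxOn f (Icc γl γr) a)
    (hf : HasDerivAt f f' a) (ha : a ∈ Icc γl γr) (hb : b ∈ Icc γl γr) :
    f' * (b - a) ≤ 0 := by
  have h := hmax.localize.hasFDerivWithinAt_nonpos hf.hasFDerivAt.hasFDerivWithinAt
    (sub_mem_posTangentConeAt_of_segment_subset ((convex_Icc γl γr).segment_subset ha hb))
  simpa [ContinuousLinearMap.smulRight_apply, smul_eq_mul, mul_comm] using h

/-- Optimality gap in the decision variable (Theorem 1, second claim). -/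
theorem stmt_1 (j : ℕ) (γl γr : ℝ) (hlr : γl < γr)
    (Rs : ℕ → ℝ → ℝ) (ns qs : ℕ → ℝ) (hq : ∀ s : ℕ, 1 ≤ s → 0 < qs s)
    (R : ℕ → ℝ → ℝ)
    (hRdiff : ∀ i ≤ j, ∀ γ ∈ Icc γl γr,
      DifferentiableAt ℝ (R i) γ ∧ DifferentiableAt ℝ (deriv (R i)) γ)
    (hRbdd : ∀ i ≤ j, ∃ B : ℝ, ∀ γ ∈ Icc γl γr,
      |R i γ| ≤ B ∧ |deriv (R i) γ| ≤ B ∧ |deriv (deriv (R i)) γ| ≤ B)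
    (hRj1diff : ∀ γ ∈ Icc γl γr, DifferentiableAt ℝ (R (j + 1)) γ)
    (hRj1bdd : ∃ B : ℝ, ∀ γ ∈ Icc γl γr,
      |R (j + 1) γ| ≤ B ∧ |deriv (R (j + 1)) γ| ≤ B)
    (hRsdiff : ∀ s : ℕ, 1 ≤ s → ∀ γ ∈ Icc γl γr, DifferentiableAt ℝ (Rs s) γ)
    (C : ℝ)
    (happrox : ∀ s : ℕ, 1 ≤ s → ∀ γ ∈ Icc γl γr,
      |Rs s γ - ns s - qs s * ∑ i ∈ Finset.range (j + 2), R i γ / Real.sqrt s ^ i|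
        ≤ C * qs s / Real.sqrt s ^ (j + 2) ∧
      |deriv (Rs s) γ - qs s * ∑ i ∈ Finset.range (j + 2), deriv (R i) γ / Real.sqrt s ^ i|
        ≤ C * qs s / Real.sqrt s ^ (j + 2))
    (hR0cont : ContinuousOn (deriv (deriv (R 0))) (Icc γl γr))
    (hR0neg : ∀ γ ∈ Icc γl γr, deriv (deriv (R 0)) γ < 0)
    (γ0 : ℝ) (hγ0 : γ0 ∈ Ioo γl γr)
    (hγ0max : IsMaxOn (R 0) (Icc γl γr) γ0)
    (hγ0uniq : ∀ γ ∈ Icc γl γr, IsMaxOn (R 0) (Icc γl γr) γ → γ = γ0)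
    (γstar : ℕ → ℝ)
    (hγstar : ∀ s : ℕ, 1 ≤ s → γstar s ∈ Ioo γl γr ∧
      IsMaxOn (Rs s) (Icc γl γr) (γstar s) ∧
      ∀ γ ∈ Icc γl γr, IsMaxOn (Rs s) (Icc γl γr) γ → γ = γstar s)
    (γj : ℕ → ℝ) (s1 : ℕ)
    (hγj : ∀ s : ℕ, s1 ≤ s → γj s ∈ Icc γl γr ∧
      IsMaxOn (fun γ => ∑ i ∈ Finset.range (j + 1), R i γ / Real.sqrt s ^ i)
        (Icc γl γr) (γj s) ∧
      ∀ γ ∈ Icc γl γr,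
        IsMaxOn (fun γ' => ∑ i ∈ Finset.range (j + 1), R i γ' / Real.sqrt s ^ i)
          (Icc γl γr) γ → γ = γj s) :
    ∃ (K : ℝ) (sj : ℕ), 0 ≤ K ∧ 1 ≤ sj ∧ ∀ s : ℕ, sj ≤ s →
      |γj s - γstar s| ≤ K / Real.sqrt s ^ (j + 1) := by
  have hγlmem : γl ∈ Icc γl γr := ⟨le_refl _, hlr.le⟩
  -- uniform bound on second derivatives
  have hex : ∀ i, ∃ B : ℝ, 0 ≤ B ∧ (i ≤ j → ∀ γ ∈ Icc γl γr, |deriv (deriv (R i)) γ| ≤ B) := by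
    intro i
    by_cases hi : i ≤ j
    · obtain ⟨B, hB⟩ := hRbdd i hi
      exact ⟨B, le_trans (abs_nonneg _) (hB γl hγlmem).1, fun _ γ hγ => (hB γ hγ).2.2⟩
    · exact ⟨0, le_rfl, fun h => absurd h hi⟩
  choose B0 hB0nn hB0 using hex
  set B : ℝ := ∑ i ∈ Finset.range (j + 1), B0 i with hBdef
  have hBnn : 0 ≤ B := Finset.sum_nonneg fun i _ => hB0nn i
  have hBi : ∀ i ≤ j, ∀ γ ∈ Icc γl γr, |deriv (deriv (R i)) γ| ≤ B := fun i hi γ hγ =>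
    (hB0 i hi γ hγ).trans
      (Finset.single_le_sum (fun k _ => hB0nn k) (Finset.mem_range.2 (Nat.lt_succ_of_le hi)))
  obtain ⟨B', hB'⟩ := hRj1bdd
  have hB'nn : 0 ≤ B' := le_trans (abs_nonneg _) (hB' γl hγlmem).1
  -- strong concavity constant
  obtain ⟨γm, hγm, hγmmax⟩ := isCompact_Icc.exists_isMaxOn (nonempty_Icc.2 hlr.le) hR0cont
  set c : ℝ := -(deriv (deriv (R 0)) γm) with hcdef
  have hc : 0 < c := neg_pos.2 (hR0neg γm hγm)
  have hcle : ∀ γ ∈ Icc γl γr, deriv (deriv (R 0)) γ ≤ -c := by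
    intro γ hγ
    have := hγmmax hγ
    simp only [hcdef, neg_neg]
    exact this
  -- C is nonnegative
  have hC0 : 0 ≤ C := by
    have h1 := (happrox 1 le_rfl γl hγlmem).1
    have hq1 := hq 1 le_rfl
    rw [Nat.cast_one, Real.sqrt_one, one_pow, div_one] at h1
    have h2 : (0:ℝ) ≤ C * qs 1 := le_trans (abs_nonneg _) h1
    exact nonneg_of_mul_nonneg_right (by linarith : (0:ℝ) ≤ qs 1 * C) hq1
  obtain ⟨s0, hs0⟩ := exists_nat_ge ((2 * (j : ℝ) * B / c) ^ 2)
  refine ⟨2 * (C + B') / c, max (max s0 s1) 1, by positivity, le_max_right _ _, ?_⟩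
  intro s hs
  have hs1 : 1 ≤ s := le_trans (le_max_right _ _) hs
  have hss0 : s0 ≤ s := le_trans (le_trans (le_max_left _ _) (le_max_left _ _)) hs
  have hss1 : s1 ≤ s := le_trans (le_trans (le_max_right _ _) (le_max_left _ _)) hs
  have hsq1 : (1:ℝ) ≤ Real.sqrt s := by
    rw [show (1:ℝ) = Real.sqrt 1 from (Real.sqrt_one).symm]
    exact Real.sqrt_le_sqrt (by exact_mod_cast hs1)
  have hsqpos : (0:ℝ) < Real.sqrt s := lt_of_lt_of_le one_pos hsq1
  have hsqB : 2 * (j : ℝ) * B / c ≤ Real.sqrt s := by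
    calc 2 * (j : ℝ) * B / c ≤ |2 * (j : ℝ) * B / c| := le_abs_self _
    _ = Real.sqrt ((2 * (j : ℝ) * B / c) ^ 2) := (Real.sqrt_sq_eq_abs _).symm
    _ ≤ Real.sqrt s := Real.sqrt_le_sqrt (le_trans hs0 (by exact_mod_cast hss0))
  obtain ⟨hγjm, hγjmax, -⟩ := hγj s hss1
  obtain ⟨hγsm, hγsmax, -⟩ := hγstar s hs1
  set a := γj s with hadef
  set b := γstar s with hbdef
  have hbm : b ∈ Icc γl γr := Ioo_subset_Icc_self hγsm
  set g : ℝ → ℝ := fun γ => ∑ i ∈ Finset.range (j + 1), deriv (R i) γ / Real.sqrt s ^ i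
    with hgdef
  set h : ℝ → ℝ := fun γ => ∑ i ∈ Finset.range (j + 1), deriv (deriv (R i)) γ / Real.sqrt s ^ i
    with hhdef
  have hder1 : ∀ γ ∈ Icc γl γr,
      HasDerivAt (fun γ => ∑ i ∈ Finset.range (j + 1), R i γ / Real.sqrt s ^ i) (g γ) γ := by
    intro γ hγ
    exact HasDerivAt.fun_sum fun i hi =>
      ((hRdiff i (Nat.lt_succ_iff.1 (Finset.mem_range.1 hi)) γ hγ).1.hasDerivAt).div_const _
  have hder2 : ∀ γ ∈ Icc γl γr, HasDerivAt g (h γ) γ := by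
    intro γ hγ
    exact HasDerivAt.fun_sum fun i hi =>
      ((hRdiff i (Nat.lt_succ_iff.1 (Finset.mem_range.1 hi)) γ hγ).2.hasDerivAt).div_const _
  -- h ≤ -c/2 on the interval
  have hneg : ∀ γ ∈ Icc γl γr, h γ ≤ -(c / 2) := by
    intro γ hγ
    have hsplit : h γ = (∑ i ∈ Finset.range j, deriv (deriv (R (i + 1))) γ / Real.sqrt s ^ (i + 1))
        + deriv (deriv (R 0)) γ := by
      simp only [hhdef]
      rw [Finset.sum_range_succ']
      simp
    have htail : (∑ i ∈ Finset.range j, deriv (deriv (R (i + 1))) γ / Real.sqrt s ^ (i + 1))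
        ≤ (j : ℝ) * (B / Real.sqrt s) := by
      calc (∑ i ∈ Finset.range j, deriv (deriv (R (i + 1))) γ / Real.sqrt s ^ (i + 1))
          ≤ ∑ i ∈ Finset.range j, B / Real.sqrt s := by
            apply Finset.sum_le_sum
            intro i hi
            have hiB := hBi (i + 1) (Nat.succ_le_of_lt (Finset.mem_range.1 hi)) γ hγ
            have h1 : deriv (deriv (R (i + 1))) γ ≤ B := le_trans (le_abs_self _) hiB
            have h2 : Real.sqrt s ≤ Real.sqrt s ^ (i + 1) := by
              calc Real.sqrt s = Real.sqrt s ^ 1 := (pow_one _).symm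
              _ ≤ Real.sqrt s ^ (i + 1) := pow_le_pow_right₀ hsq1 (Nat.le_add_left 1 i)
            exact div_le_div₀ hBnn (le_trans (le_abs_self _) hiB) hsqpos h2
        _ = (j : ℝ) * (B / Real.sqrt s) := by
            rw [Finset.sum_const, Finset.card_range, nsmul_eq_mul]
    have hjB : (j : ℝ) * (B / Real.sqrt s) ≤ c / 2 := by
      rw [div_le_iff₀ hc] at hsqB
      rw [mul_div_assoc'] at *
      rw [div_le_iff₀ hsqpos]
      nlinarith
    have := hcle γ hγ
    linarith [hsplit ▸ (add_le_add htail this)]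
  -- first-order condition at b
  have hz : deriv (Rs s) b = 0 :=
    (hγsmax.isLocalMax (Icc_mem_nhds hγsm.1 hγsm.2)).deriv_eq_zero
  -- bound |g b|
  have hgb : |g b| ≤ (C + B') / Real.sqrt s ^ (j + 1) := by
    have happ := (happrox s hs1 b hbm).2
    rw [hz] at happ
    set S : ℝ := ∑ i ∈ Finset.range (j + 2), deriv (R i) b / Real.sqrt s ^ i with hSdef
    have hqS : |qs s * S| ≤ C * qs s / Real.sqrt s ^ (j + 2) := by
      simpa [abs_neg] using happ
    have hqpos := hq s hs1
    have hS : |S| ≤ C / Real.sqrt s ^ (j + 2) := by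
      rw [abs_mul, abs_of_pos hqpos] at hqS
      rw [show C * qs s / Real.sqrt s ^ (j + 2) = qs s * (C / Real.sqrt s ^ (j + 2)) by ring]
        at hqS
      exact le_of_mul_le_mul_left hqS hqpos
    have hSsplit : S = g b + deriv (R (j + 1)) b / Real.sqrt s ^ (j + 1) := by
      rw [hSdef, hgdef, Finset.sum_range_succ]
    have hT : |deriv (R (j + 1)) b / Real.sqrt s ^ (j + 1)| ≤ B' / Real.sqrt s ^ (j + 1) := by
      rw [abs_div, abs_of_pos (by positivity : (0:ℝ) < Real.sqrt s ^ (j + 1))]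
      gcongr
      exact (hB' b hbm).2
    have hpow : Real.sqrt s ^ (j + 1) ≤ Real.sqrt s ^ (j + 2) :=
      pow_le_pow_right₀ hsq1 (by omega)
    have hCB : C / Real.sqrt s ^ (j + 2) ≤ C / Real.sqrt s ^ (j + 1) := by
      exact div_le_div_of_nonneg_left hC0 (by positivity) hpow
    calc |g b| = |S - deriv (R (j + 1)) b / Real.sqrt s ^ (j + 1)| := by rw [hSsplit]; ring_nf
      _ ≤ |S| + |deriv (R (j + 1)) b / Real.sqrt s ^ (j + 1)| := abs_sub _ _
      _ ≤ C / Real.sqrt s ^ (j + 1) + B' / Real.sqrt s ^ (j + 1) :=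
          add_le_add (le_trans hS hCB) hT
      _ = (C + B') / Real.sqrt s ^ (j + 1) := by ring
  -- first-order condition at a
  have hfoc : g a * (b - a) ≤ 0 := foc_aux hγjmax (hder1 a hγjm) hγjm hbm
  set P : ℝ := Real.sqrt s ^ (j + 1) with hPdef
  have hP : (0:ℝ) < P := by positivity
  have hM : (0:ℝ) ≤ C + B' := add_nonneg hC0 hB'nn
  -- main case analysis
  rcases lt_trichotomy a b with hab | hab | hab
  · -- a < b
    obtain ⟨ξ, hξ, hξeq⟩ := exists_hasDerivAt_eq_slope g h hab
      (fun x hx => ((hder2 x (Icc_subset_Icc hγjm.1 hbm.2 hx)).continuousAt).continuousWithinAt)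
      (fun x hx => hder2 x (Icc_subset_Icc hγjm.1 hbm.2 (Ioo_subset_Icc_self hx)))
    have hξm : ξ ∈ Icc γl γr := Icc_subset_Icc hγjm.1 hbm.2 (Ioo_subset_Icc_self hξ)
    have hξneg := hneg ξ hξm
    have hslope : g b - g a = h ξ * (b - a) := by
      rw [hξeq, div_mul_cancel₀ _ (sub_ne_zero.2 hab.ne')]
    have hga : g a ≤ 0 := by
      by_contra hpos
      push_neg at hpos
      have hba : (0:ℝ) < b - a := by linarith
      linarith [mul_pos hpos hba]
    have hgbneg : g b ≤ -(c / 2) * (b - a) := by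
      have := mul_le_mul_of_nonneg_right hξneg (show (0:ℝ) ≤ b - a by linarith)
      linarith
    have hkey : c / 2 * (b - a) ≤ (C + B') / P := by
      calc c / 2 * (b - a) ≤ -(g b) := by linarith
        _ ≤ |g b| := neg_le_abs _
        _ ≤ (C + B') / P := hgb
    rw [abs_of_nonpos (by linarith : a - b ≤ 0)]
    rw [div_div, le_div_iff₀ (by positivity : (0:ℝ) < c * P)]
    have h2 := mul_le_mul_of_nonneg_right hkey hP.le
    rw [div_mul_cancel₀ _ hP.ne'] at h2
    calc -(a - b) * (c * P) = 2 * (c / 2 * (b - a) * P) := by ring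
      _ ≤ 2 * (C + B') := by linarith
  · simp [hab, hP.le, div_nonneg (by positivity : (0:ℝ) ≤ 2 * (C + B') / c) hP.le]
  · -- b < a
    obtain ⟨ξ, hξ, hξeq⟩ := exists_hasDerivAt_eq_slope g h hab
      (fun x hx => ((hder2 x (Icc_subset_Icc hbm.1 hγjm.2 hx)).continuousAt).continuousWithinAt)
      (fun x hx => hder2 x (Icc_subset_Icc hbm.1 hγjm.2 (Ioo_subset_Icc_self hx)))
    have hξm : ξ ∈ Icc γl γr := Icc_subset_Icc hbm.1 hγjm.2 (Ioo_subset_Icc_self hξ)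
    have hξneg := hneg ξ hξm
    have hslope : g a - g b = h ξ * (a - b) := by
      rw [hξeq, div_mul_cancel₀ _ (sub_ne_zero.2 hab.ne')]
    have hga : 0 ≤ g a := by
      by_contra hpos
      push_neg at hpos
      have hba : b - a < 0 := by linarith
      linarith [mul_pos_of_neg_of_neg hpos hba]
    have hgbpos : c / 2 * (a - b) ≤ g b := by
      have := mul_le_mul_of_nonneg_right hξneg (show (0:ℝ) ≤ a - b by linarith)
      linarith
    have hkey : c / 2 * (a - b) ≤ (C + B') / P := by
      calc c / 2 * (a - b) ≤ g b := hgbpos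
        _ ≤ |g b| := le_abs_self _
        _ ≤ (C + B') / P := hgb
    rw [abs_of_nonneg (by linarith : 0 ≤ a - b)]
    rw [div_div, le_div_iff₀ (by positivity : (0:ℝ) < c * P)]
    have h2 := mul_le_mul_of_nonneg_right hkey hP.le
    rw [div_mul_cancel₀ _ hP.ne'] at h2
    calc (a - b) * (c * P) = 2 * (c / 2 * (a - b) * P) := by ring
      _ ≤ 2 * (C + B') := by linarith
end

section
/- There exist a constant M_j′ > 0 independent of s and an integer s_j′ ≥ 1 such that for all integers s ≥ s_j′, |Σ_{i=0}^{j} R_i′(γ*_s)/s^{i/2}| ≤ M_j′ / s^{(j+1)/2}. -/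
open Set Finset

/-- Corollary 1: bound on the derivative of the expansion at the exact optimizer. -/
theorem stmt_3 (j : ℕ) (γl γr : ℝ) (hlr : γl < γr)
    (Rs : ℕ → ℝ → ℝ) (ns qs : ℕ → ℝ) (hq : ∀ s : ℕ, 1 ≤ s → 0 < qs s)
    (R : ℕ → ℝ → ℝ)
    (hRdiff : ∀ i ≤ j, ∀ γ ∈ Icc γl γr,
      DifferentiableAt ℝ (R i) γ ∧ DifferentiableAt ℝ (deriv (R i)) γ)
    (hRbdd : ∀ i ≤ j, ∃ B : ℝ, ∀ γ ∈ Icc γl γr,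
      |R i γ| ≤ B ∧ |deriv (R i) γ| ≤ B ∧ |deriv (deriv (R i)) γ| ≤ B)
    (hRj1diff : ∀ γ ∈ Icc γl γr, DifferentiableAt ℝ (R (j + 1)) γ)
    (hRj1bdd : ∃ B : ℝ, ∀ γ ∈ Icc γl γr,
      |R (j + 1) γ| ≤ B ∧ |deriv (R (j + 1)) γ| ≤ B)
    (hRsdiff : ∀ s : ℕ, 1 ≤ s → ∀ γ ∈ Icc γl γr, DifferentiableAt ℝ (Rs s) γ)
    (C : ℝ)
    (happrox : ∀ s : ℕ, 1 ≤ s → ∀ γ ∈ Icc γl γr,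
      |Rs s γ - ns s - qs s * ∑ i ∈ Finset.range (j + 2), R i γ / Real.sqrt s ^ i|
        ≤ C * qs s / Real.sqrt s ^ (j + 2) ∧
      |deriv (Rs s) γ - qs s * ∑ i ∈ Finset.range (j + 2), deriv (R i) γ / Real.sqrt s ^ i|
        ≤ C * qs s / Real.sqrt s ^ (j + 2))
    (hR0cont : ContinuousOn (deriv (deriv (R 0))) (Icc γl γr))
    (hR0neg : ∀ γ ∈ Icc γl γr, deriv (deriv (R 0)) γ < 0)
    (γ0 : ℝ) (hγ0 : γ0 ∈ Ioo γl γr)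
    (hγ0max : IsMaxOn (R 0) (Icc γl γr) γ0)
    (hγ0uniq : ∀ γ ∈ Icc γl γr, IsMaxOn (R 0) (Icc γl γr) γ → γ = γ0)
    (γstar : ℕ → ℝ)
    (hγstar : ∀ s : ℕ, 1 ≤ s → γstar s ∈ Ioo γl γr ∧
      IsMaxOn (Rs s) (Icc γl γr) (γstar s) ∧
      ∀ γ ∈ Icc γl γr, IsMaxOn (Rs s) (Icc γl γr) γ → γ = γstar s)
    :
    ∃ (M' : ℝ) (sj' : ℕ), 0 < M' ∧ 1 ≤ sj' ∧ ∀ s : ℕ, sj' ≤ s →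
      |∑ i ∈ Finset.range (j + 1), deriv (R i) (γstar s) / Real.sqrt s ^ i|
        ≤ M' / Real.sqrt s ^ (j + 1) := by
  obtain ⟨B, hB⟩ := hRj1bdd
  refine ⟨|C| + |B| + 1, 1, by positivity, le_refl 1, ?_⟩
  intro s hs
  have hs1 : (1 : ℝ) ≤ Real.sqrt s := by
    rw [show (1 : ℝ) = Real.sqrt 1 by simp]
    exact Real.sqrt_le_sqrt (by exact_mod_cast hs)
  have hsp : ∀ k : ℕ, 0 < Real.sqrt s ^ k := fun k =>
    pow_pos (lt_of_lt_of_le one_pos hs1) k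
  obtain ⟨hmem, hmax, _⟩ := hγstar s hs
  have hIcc : γstar s ∈ Icc γl γr := Ioo_subset_Icc_self hmem
  have hderiv0 : deriv (Rs s) (γstar s) = 0 :=
    (hmax.isLocalMax (Icc_mem_nhds hmem.1 hmem.2)).deriv_eq_zero
  have happ := (happrox s hs (γstar s) hIcc).2
  rw [hderiv0] at happ
  have hq' := hq s hs
  set S := ∑ i ∈ Finset.range (j + 2), deriv (R i) (γstar s) / Real.sqrt s ^ i with hS
  have habs : qs s * |S| ≤ C * qs s / Real.sqrt s ^ (j + 2) := by
    calc qs s * |S| = |0 - qs s * S| := by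
          rw [zero_sub, abs_neg, abs_mul, abs_of_pos hq']
      _ ≤ C * qs s / Real.sqrt s ^ (j + 2) := happ
  have hSbound : |S| ≤ C / Real.sqrt s ^ (j + 2) := by
    have h := habs
    rw [mul_comm C (qs s), mul_div_assoc] at h
    exact le_of_mul_le_mul_left h hq'
  have hsplit : S = (∑ i ∈ Finset.range (j + 1), deriv (R i) (γstar s) / Real.sqrt s ^ i)
      + deriv (R (j + 1)) (γstar s) / Real.sqrt s ^ (j + 1) := by
    rw [hS, Finset.sum_range_succ]
  have hT : |∑ i ∈ Finset.range (j + 1), deriv (R i) (γstar s) / Real.sqrt s ^ i|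
      ≤ |S| + |deriv (R (j + 1)) (γstar s) / Real.sqrt s ^ (j + 1)| := by
    have : (∑ i ∈ Finset.range (j + 1), deriv (R i) (γstar s) / Real.sqrt s ^ i)
        = S - deriv (R (j + 1)) (γstar s) / Real.sqrt s ^ (j + 1) := by
      rw [hsplit]; ring
    rw [this]
    exact abs_sub (S) _
  have hlast : |deriv (R (j + 1)) (γstar s) / Real.sqrt s ^ (j + 1)|
      ≤ |B| / Real.sqrt s ^ (j + 1) := by
    rw [abs_div, abs_of_pos (hsp (j + 1))]
    exact div_le_div_of_nonneg_right (le_trans ((hB _ hIcc).2) (le_abs_self B))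
      (hsp (j + 1)).le
  have hCstep : C / Real.sqrt s ^ (j + 2) ≤ |C| / Real.sqrt s ^ (j + 1) := by
    have h1 : C / Real.sqrt s ^ (j + 2) ≤ |C| / Real.sqrt s ^ (j + 2) :=
      div_le_div_of_nonneg_right (le_abs_self C) (hsp (j + 2)).le
    have h2 : |C| / Real.sqrt s ^ (j + 2) ≤ |C| / Real.sqrt s ^ (j + 1) :=
      div_le_div_of_nonneg_left (abs_nonneg C) (hsp (j + 1))
        (pow_le_pow_right₀ hs1 (by omega))
    exact h1.trans h2
  calc |∑ i ∈ Finset.range (j + 1), deriv (R i) (γstar s) / Real.sqrt s ^ i|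
      ≤ |S| + |deriv (R (j + 1)) (γstar s) / Real.sqrt s ^ (j + 1)| := hT
    _ ≤ C / Real.sqrt s ^ (j + 2) + |B| / Real.sqrt s ^ (j + 1) :=
        add_le_add hSbound hlast
    _ ≤ |C| / Real.sqrt s ^ (j + 1) + |B| / Real.sqrt s ^ (j + 1) :=
        add_le_add hCstep le_rfl
    _ ≤ (|C| + |B| + 1) / Real.sqrt s ^ (j + 1) := by
        rw [← add_div]
        apply div_le_div_of_nonneg_right _ (hsp (j + 1)).le
        linarith
    _ = (|C| + |B| + 1) / Real.sqrt s ^ (j + 1) := rfl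
end

section
/- For all integers s ≥ 1 for which γ_{j,s} is defined, 0 ≤ R_s(γ*_s) − R_s(γ_{j,s}), and there exist a constant C′ and an integer s′ ≥ 1 such that for all s ≥ s′, R_s(γ*_s) − R_s(γ_{j,s}) ≤ q_s ( (R_{j+1}(γ*_s) − R_{j+1}(γ_{j,s})) / s^{(j+1)/2} + C′ / s^{(j+2)/2} ). -/
open Set Finset

/-- Suboptimality sandwich used in the proof of Theorem 1. -/
theorem stmt_4 (j : ℕ) (γl γr : ℝ) (hlr : γl < γr)
    (Rs : ℕ → ℝ → ℝ) (ns qs : ℕ → ℝ) (hq : ∀ s : ℕ, 1 ≤ s → 0 < qs s)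
    (R : ℕ → ℝ → ℝ)
    (hRdiff : ∀ i ≤ j, ∀ γ ∈ Icc γl γr,
      DifferentiableAt ℝ (R i) γ ∧ DifferentiableAt ℝ (deriv (R i)) γ)
    (hRbdd : ∀ i ≤ j, ∃ B : ℝ, ∀ γ ∈ Icc γl γr,
      |R i γ| ≤ B ∧ |deriv (R i) γ| ≤ B ∧ |deriv (deriv (R i)) γ| ≤ B)
    (hRj1diff : ∀ γ ∈ Icc γl γr, DifferentiableAt ℝ (R (j + 1)) γ)
    (hRj1bdd : ∃ B : ℝ, ∀ γ ∈ Icc γl γr,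
      |R (j + 1) γ| ≤ B ∧ |deriv (R (j + 1)) γ| ≤ B)
    (hRsdiff : ∀ s : ℕ, 1 ≤ s → ∀ γ ∈ Icc γl γr, DifferentiableAt ℝ (Rs s) γ)
    (C : ℝ)
    (happrox : ∀ s : ℕ, 1 ≤ s → ∀ γ ∈ Icc γl γr,
      |Rs s γ - ns s - qs s * ∑ i ∈ Finset.range (j + 2), R i γ / Real.sqrt s ^ i|
        ≤ C * qs s / Real.sqrt s ^ (j + 2))
    (hR0cont : ContinuousOn (deriv (deriv (R 0))) (Icc γl γr))
    (hR0neg : ∀ γ ∈ Icc γl γr, deriv (deriv (R 0)) γ < 0)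
    (γ0 : ℝ) (hγ0 : γ0 ∈ Ioo γl γr)
    (hγ0max : IsMaxOn (R 0) (Icc γl γr) γ0)
    (hγ0uniq : ∀ γ ∈ Icc γl γr, IsMaxOn (R 0) (Icc γl γr) γ → γ = γ0)
    (γstar : ℕ → ℝ)
    (hγstar : ∀ s : ℕ, 1 ≤ s → γstar s ∈ Ioo γl γr ∧
      IsMaxOn (Rs s) (Icc γl γr) (γstar s) ∧
      ∀ γ ∈ Icc γl γr, IsMaxOn (Rs s) (Icc γl γr) γ → γ = γstar s)
    (γj : ℕ → ℝ) (s1 : ℕ)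
    (hγj : ∀ s : ℕ, s1 ≤ s → γj s ∈ Icc γl γr ∧
      IsMaxOn (fun γ => ∑ i ∈ Finset.range (j + 1), R i γ / Real.sqrt s ^ i)
        (Icc γl γr) (γj s) ∧
      ∀ γ ∈ Icc γl γr,
        IsMaxOn (fun γ' => ∑ i ∈ Finset.range (j + 1), R i γ' / Real.sqrt s ^ i)
          (Icc γl γr) γ → γ = γj s) :
    (∀ s : ℕ, 1 ≤ s → s1 ≤ s → 0 ≤ Rs s (γstar s) - Rs s (γj s)) ∧
    ∃ (C' : ℝ) (s' : ℕ), 1 ≤ s' ∧ ∀ s : ℕ, s' ≤ s →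
      Rs s (γstar s) - Rs s (γj s)
        ≤ qs s * ((R (j + 1) (γstar s) - R (j + 1) (γj s)) / Real.sqrt s ^ (j + 1)
            + C' / Real.sqrt s ^ (j + 2)) := by
  constructor
  · intro s hs1 hss1
    obtain ⟨hmem, hmax, -⟩ := hγstar s hs1
    obtain ⟨hjmem, -, -⟩ := hγj s hss1
    have h := hmax hjmem
    simp only [Set.mem_setOf_eq] at h
    linarith
  · refine ⟨2 * C, max 1 s1, le_max_left _ _, ?_⟩
    intro s hs
    have hs1 : 1 ≤ s := le_trans (le_max_left 1 s1) hs
    have hss1 : s1 ≤ s := le_trans (le_max_right 1 s1) hs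
    obtain ⟨hmem, -, -⟩ := hγstar s hs1
    obtain ⟨hjmem, hjmax, -⟩ := hγj s hss1
    have hmem' : γstar s ∈ Icc γl γr := Ioo_subset_Icc_self hmem
    have hq' := hq s hs1
    have h1 := abs_le.mp (happrox s hs1 (γstar s) hmem')
    have h2 := abs_le.mp (happrox s hs1 (γj s) hjmem)
    have hF : (∑ i ∈ Finset.range (j+1), R i (γstar s) / Real.sqrt s ^ i)
        ≤ ∑ i ∈ Finset.range (j+1), R i (γj s) / Real.sqrt s ^ i := hjmax hmem'
    have e1 : (∑ i ∈ Finset.range (j+2), R i (γstar s) / Real.sqrt s ^ i)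
        = (∑ i ∈ Finset.range (j+1), R i (γstar s) / Real.sqrt s ^ i)
          + R (j+1) (γstar s) / Real.sqrt s ^ (j+1) := Finset.sum_range_succ _ _
    have e2 : (∑ i ∈ Finset.range (j+2), R i (γj s) / Real.sqrt s ^ i)
        = (∑ i ∈ Finset.range (j+1), R i (γj s) / Real.sqrt s ^ i)
          + R (j+1) (γj s) / Real.sqrt s ^ (j+1) := Finset.sum_range_succ _ _
    have hqF : qs s * (∑ i ∈ Finset.range (j+1), R i (γstar s) / Real.sqrt s ^ i)
        ≤ qs s * (∑ i ∈ Finset.range (j+1), R i (γj s) / Real.sqrt s ^ i) :=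
      mul_le_mul_of_nonneg_left hF hq'.le
    have eq1 : qs s * (∑ i ∈ Finset.range (j+2), R i (γstar s) / Real.sqrt s ^ i)
        = qs s * (∑ i ∈ Finset.range (j+1), R i (γstar s) / Real.sqrt s ^ i)
          + qs s * (R (j+1) (γstar s) / Real.sqrt s ^ (j+1)) := by rw [e1]; ring
    have eq2 : qs s * (∑ i ∈ Finset.range (j+2), R i (γj s) / Real.sqrt s ^ i)
        = qs s * (∑ i ∈ Finset.range (j+1), R i (γj s) / Real.sqrt s ^ i)
          + qs s * (R (j+1) (γj s) / Real.sqrt s ^ (j+1)) := by rw [e2]; ring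
    have eq3 : qs s * ((R (j + 1) (γstar s) - R (j + 1) (γj s)) / Real.sqrt s ^ (j + 1)
            + 2 * C / Real.sqrt s ^ (j + 2))
        = qs s * (R (j+1) (γstar s) / Real.sqrt s ^ (j+1))
          - qs s * (R (j+1) (γj s) / Real.sqrt s ^ (j+1))
          + 2 * (C * qs s / Real.sqrt s ^ (j + 2)) := by ring
    linarith [h1.2, h2.1]
end

section
/- There exist a constant M_j ≥ 0 independent of s and an integer s_j ≥ 1 such that for all integers s ≥ s_j, |D_s(γ_{j,s}) − ε| ≤ M_j / s^{(j+1)/2}. -/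
open Set Finset

/-- Corollary 2, first claim: constraint gap for dimensioning under a delay constraint. -/
theorem stmt_5 (j : ℕ) (ε : ℝ) (hε : ε ∈ Ioo (0 : ℝ) 1)
    (γl γr : ℝ) (hlr : γl < γr)
    (Ds : ℕ → ℝ → ℝ) (D : ℕ → ℝ → ℝ)
    (hDdiff : ∀ i ≤ j, ∀ γ ∈ Icc γl γr,
      DifferentiableAt ℝ (D i) γ ∧ DifferentiableAt ℝ (deriv (D i)) γ)
    (hDbdd : ∀ i ≤ j, ∃ B : ℝ, ∀ γ ∈ Icc γl γr,
      |D i γ| ≤ B ∧ |deriv (D i) γ| ≤ B ∧ |deriv (deriv (D i)) γ| ≤ B)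
    (hDj1bdd : ∃ B : ℝ, ∀ γ ∈ Icc γl γr, |D (j + 1) γ| ≤ B)
    (C : ℝ)
    (happrox : ∀ s : ℕ, 1 ≤ s → ∀ γ ∈ Icc γl γr,
      |Ds s γ - ∑ i ∈ Finset.range (j + 2), D i γ / Real.sqrt s ^ i|
        ≤ C / Real.sqrt s ^ (j + 2))
    (hD0cont : ContinuousOn (deriv (D 0)) (Icc γl γr))
    (hD0neg : ∀ γ ∈ Icc γl γr, deriv (D 0) γ < 0)
    (γ0 : ℝ) (hγ0 : γ0 ∈ Ioo γl γr) (hγ0sol : D 0 γ0 = ε)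
    (γstar : ℕ → ℝ)
    (hγstar : ∀ s : ℕ, 1 ≤ s → γstar s ∈ Ioo γl γr ∧ Ds s (γstar s) = ε ∧
      ∀ γ ∈ Icc γl γr, Ds s γ = ε → γ = γstar s)
    (γj : ℕ → ℝ) (s1 : ℕ)
    (hγj : ∀ s : ℕ, s1 ≤ s → γj s ∈ Icc γl γr ∧
      ∑ i ∈ Finset.range (j + 1), D i (γj s) / Real.sqrt s ^ i = ε ∧
      ∀ γ ∈ Icc γl γr,
        ∑ i ∈ Finset.range (j + 1), D i γ / Real.sqrt s ^ i = ε → γ = γj s) :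
    ∃ (M : ℝ) (sj : ℕ), 0 ≤ M ∧ 1 ≤ sj ∧ ∀ s : ℕ, sj ≤ s →
      |Ds s (γj s) - ε| ≤ M / Real.sqrt s ^ (j + 1) := by

  obtain ⟨B, hB⟩ := hDj1bdd
  have hγlmem : γl ∈ Icc γl γr := ⟨le_refl _, hlr.le⟩
  have hB0 : 0 ≤ B := le_trans (abs_nonneg _) (hB γl hγlmem)
  refine ⟨|C| + B, max s1 1, by positivity, le_max_right _ _, ?_⟩
  intro s hs
  have hs1 : s1 ≤ s := le_trans (le_max_left _ _) hs
  have h1 : 1 ≤ s := le_trans (le_max_right _ _) hs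
  obtain ⟨hmem, heq, -⟩ := hγj s hs1
  set r := Real.sqrt s with hr
  have hrs : 1 ≤ r := Real.one_le_sqrt.mpr (by exact_mod_cast h1)
  have hrpos : 0 < r := lt_of_lt_of_le one_pos hrs
  have key := happrox s h1 (γj s) hmem
  rw [Finset.sum_range_succ, heq] at key
  have hBsum : |D (j+1) (γj s) / r ^ (j+1)| ≤ B / r ^ (j+1) := by
    rw [abs_div, abs_of_pos (pow_pos hrpos _)]
    gcongr
    exact hB _ hmem
  have h2 : |Ds s (γj s) - ε| ≤ C / r ^ (j+2) + B / r ^ (j+1) := by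
    have : Ds s (γj s) - ε = (Ds s (γj s) - (ε + D (j+1) (γj s) / r ^ (j+1)))
        + D (j+1) (γj s) / r ^ (j+1) := by ring
    rw [this]
    exact (abs_add_le _ _).trans (add_le_add key hBsum)
  have h3 : C / r ^ (j+2) ≤ |C| / r ^ (j+1) :=
    div_le_div₀ (abs_nonneg C) (le_abs_self C) (pow_pos hrpos _)
      (pow_le_pow_right₀ hrs (by omega))
  calc |Ds s (γj s) - ε| ≤ C / r ^ (j+2) + B / r ^ (j+1) := h2
    _ ≤ |C| / r ^ (j+1) + B / r ^ (j+1) := by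
        exact add_le_add h3 (le_refl _)
    _ = (|C| + B) / r ^ (j+1) := by rw [add_div]
end

section
/- There exist a constant K_j ≥ 0 independent of s and an integer s_j ≥ 1 such that for all integers s ≥ s_j, |γ_{j,s} − γ*_s| ≤ K_j / s^{(j+1)/2}. -/
open Set Finset

/-- Corollary 2, second claim: decision-variable gap for dimensioning under a delay constraint. -/
theorem stmt_6 (j : ℕ) (ε : ℝ) (hε : ε ∈ Ioo (0 : ℝ) 1)
    (γl γr : ℝ) (hlr : γl < γr)
    (Ds : ℕ → ℝ → ℝ) (D : ℕ → ℝ → ℝ)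
    (hDdiff : ∀ i ≤ j, ∀ γ ∈ Icc γl γr,
      DifferentiableAt ℝ (D i) γ ∧ DifferentiableAt ℝ (deriv (D i)) γ)
    (hDbdd : ∀ i ≤ j, ∃ B : ℝ, ∀ γ ∈ Icc γl γr,
      |D i γ| ≤ B ∧ |deriv (D i) γ| ≤ B ∧ |deriv (deriv (D i)) γ| ≤ B)
    (hDj1bdd : ∃ B : ℝ, ∀ γ ∈ Icc γl γr, |D (j + 1) γ| ≤ B)
    (C : ℝ)
    (happrox : ∀ s : ℕ, 1 ≤ s → ∀ γ ∈ Icc γl γr,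
      |Ds s γ - ∑ i ∈ Finset.range (j + 2), D i γ / Real.sqrt s ^ i|
        ≤ C / Real.sqrt s ^ (j + 2))
    (hD0cont : ContinuousOn (deriv (D 0)) (Icc γl γr))
    (hD0neg : ∀ γ ∈ Icc γl γr, deriv (D 0) γ < 0)
    (γ0 : ℝ) (hγ0 : γ0 ∈ Ioo γl γr) (hγ0sol : D 0 γ0 = ε)
    (γstar : ℕ → ℝ)
    (hγstar : ∀ s : ℕ, 1 ≤ s → γstar s ∈ Ioo γl γr ∧ Ds s (γstar s) = ε ∧
      ∀ γ ∈ Icc γl γr, Ds s γ = ε → γ = γstar s)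
    (γj : ℕ → ℝ) (s1 : ℕ)
    (hγj : ∀ s : ℕ, s1 ≤ s → γj s ∈ Icc γl γr ∧
      ∑ i ∈ Finset.range (j + 1), D i (γj s) / Real.sqrt s ^ i = ε ∧
      ∀ γ ∈ Icc γl γr,
        ∑ i ∈ Finset.range (j + 1), D i γ / Real.sqrt s ^ i = ε → γ = γj s) :
    ∃ (K : ℝ) (sj : ℕ), 0 ≤ K ∧ 1 ≤ sj ∧ ∀ s : ℕ, sj ≤ s →
      |γj s - γstar s| ≤ K / Real.sqrt s ^ (j + 1) := by
  classical
  have hγlm : γl ∈ Icc γl γr := ⟨le_rfl, hlr.le⟩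
  -- a uniform bound B on |deriv (D i)| for i ≤ j
  have hBex : ∀ i : ℕ, ∃ B : ℝ, 0 ≤ B ∧ (i ≤ j → ∀ γ ∈ Icc γl γr, |deriv (D i) γ| ≤ B) := by
    intro i
    by_cases hi : i ≤ j
    · obtain ⟨B, hB⟩ := hDbdd i hi
      exact ⟨max B 0, le_max_right _ _, fun _ γ hγ => le_max_of_le_left ((hB γ hγ).2.1)⟩
    · exact ⟨0, le_rfl, fun h => absurd h hi⟩
  choose Bf hBf0 hBf using hBex
  set B : ℝ := ∑ i ∈ Finset.range (j + 1), Bf i with hBdef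
  have hB0 : 0 ≤ B := Finset.sum_nonneg fun i _ => hBf0 i
  have hBle : ∀ i ≤ j, ∀ γ ∈ Icc γl γr, |deriv (D i) γ| ≤ B := by
    intro i hi γ hγ
    exact (hBf i hi γ hγ).trans
      (Finset.single_le_sum (fun k _ => hBf0 k) (Finset.mem_range.2 (Nat.lt_succ_of_le hi)))
  obtain ⟨B1, hB1⟩ := hDj1bdd
  have hB10 : 0 ≤ B1 := le_trans (abs_nonneg _) (hB1 γl hγlm)
  have hC0 : 0 ≤ C := by
    have h := happrox 1 le_rfl γl hγlm
    have h1 : Real.sqrt ((1:ℕ):ℝ) = 1 := by norm_num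
    rw [h1, one_pow, div_one] at h
    exact le_trans (abs_nonneg _) h
  -- m : uniform negativity of deriv (D 0)
  obtain ⟨x0, hx0mem, hx0max⟩ :=
    isCompact_Icc.exists_isMaxOn (Set.nonempty_Icc.2 hlr.le) hD0cont
  set m : ℝ := -(deriv (D 0) x0) with hmdef
  have hm0 : 0 < m := by have := hD0neg x0 hx0mem; simp only [hmdef]; linarith
  have hmle : ∀ γ ∈ Icc γl γr, deriv (D 0) γ ≤ -m := by
    intro γ hγ
    have := hx0max hγ
    simp only [hmdef, neg_neg]
    exact this
  -- differentiability of the partial sum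
  have hFdiff : ∀ (s : ℕ) (γ : ℝ), γ ∈ Icc γl γr →
      DifferentiableAt ℝ (fun γ => ∑ i ∈ Finset.range (j + 1), D i γ / Real.sqrt s ^ i) γ := by
    intro s γ hγ
    exact DifferentiableAt.fun_sum fun i hi =>
      ((hDdiff i (Nat.lt_succ_iff.1 (Finset.mem_range.1 hi)) γ hγ).1).div_const _
  have hFderiv : ∀ (s : ℕ) (γ : ℝ), γ ∈ Icc γl γr →
      deriv (fun γ => ∑ i ∈ Finset.range (j + 1), D i γ / Real.sqrt s ^ i) γ
        = ∑ i ∈ Finset.range (j + 1), deriv (D i) γ / Real.sqrt s ^ i := by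
    intro s γ hγ
    rw [deriv_fun_sum (fun i hi =>
      ((hDdiff i (Nat.lt_succ_iff.1 (Finset.mem_range.1 hi)) γ hγ).1).div_const _)]
    exact Finset.sum_congr rfl fun i _ => deriv_div_const _
  -- derivative bound
  have hderivbnd : ∀ s : ℕ, 1 ≤ s → (j:ℝ) * B ≤ m / 2 * Real.sqrt s →
      ∀ γ ∈ Icc γl γr,
        deriv (fun γ => ∑ i ∈ Finset.range (j + 1), D i γ / Real.sqrt s ^ i) γ ≤ -(m/2) := by
    intro s hs hsm γ hγ
    have hsq1 : (1:ℝ) ≤ Real.sqrt s := by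
      rw [show (1:ℝ) = Real.sqrt 1 by simp]
      exact Real.sqrt_le_sqrt (by exact_mod_cast hs)
    have hsq0 : (0:ℝ) < Real.sqrt s := lt_of_lt_of_le one_pos hsq1
    rw [hFderiv s γ hγ, Finset.sum_range_succ']
    have h0 : deriv (D 0) γ / Real.sqrt s ^ 0 = deriv (D 0) γ := by simp
    have hterm : ∀ i ∈ Finset.range j,
        deriv (D (i+1)) γ / Real.sqrt s ^ (i+1) ≤ B / Real.sqrt s := by
      intro i hi
      have hile : i + 1 ≤ j := Nat.succ_le_of_lt (Finset.mem_range.1 hi)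
      have h1 : deriv (D (i+1)) γ ≤ B := (abs_le.1 (hBle _ hile γ hγ)).2
      have h2 : Real.sqrt s ≤ Real.sqrt s ^ (i+1) := by
        calc Real.sqrt s = Real.sqrt s ^ 1 := (pow_one _).symm
        _ ≤ Real.sqrt s ^ (i+1) := pow_le_pow_right₀ hsq1 (Nat.le_add_left 1 i)
      gcongr
    have hsum : ∑ i ∈ Finset.range j, deriv (D (i+1)) γ / Real.sqrt s ^ (i+1)
        ≤ (j:ℝ) * (B / Real.sqrt s) := by
      calc ∑ i ∈ Finset.range j, deriv (D (i+1)) γ / Real.sqrt s ^ (i+1)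
          ≤ ∑ _i ∈ Finset.range j, B / Real.sqrt s := Finset.sum_le_sum hterm
      _ = (j:ℝ) * (B / Real.sqrt s) := by
            simp [Finset.sum_const, Finset.card_range, nsmul_eq_mul]
    have hjs : (j:ℝ) * (B / Real.sqrt s) ≤ m / 2 := by
      rw [mul_div_assoc'] at hsum ⊢
      rw [div_le_iff₀ hsq0]
      linarith
    have hd0 := hmle γ hγ
    rw [h0]
    linarith
  -- quantitative injectivity via MVT
  have hkey : ∀ s : ℕ, 1 ≤ s → (j:ℝ) * B ≤ m / 2 * Real.sqrt s →
      ∀ a ∈ Icc γl γr, ∀ b ∈ Icc γl γr,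
        m/2 * |b - a| ≤ |(∑ i ∈ Finset.range (j + 1), D i b / Real.sqrt s ^ i)
          - ∑ i ∈ Finset.range (j + 1), D i a / Real.sqrt s ^ i| := by
    intro s hs hsm
    have main : ∀ a ∈ Icc γl γr, ∀ b ∈ Icc γl γr, a < b →
        m/2 * (b - a) ≤ |(∑ i ∈ Finset.range (j + 1), D i b / Real.sqrt s ^ i)
          - ∑ i ∈ Finset.range (j + 1), D i a / Real.sqrt s ^ i| := by
      intro a ha b hb hab
      set G : ℝ → ℝ := fun γ => ∑ i ∈ Finset.range (j + 1), D i γ / Real.sqrt s ^ i with hGdef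
      have hsub : Icc a b ⊆ Icc γl γr := Icc_subset_Icc ha.1 hb.2
      have hcont : ContinuousOn G (Icc a b) := fun x hx =>
        ((hFdiff s x (hsub hx)).continuousAt).continuousWithinAt
      have hdiff : DifferentiableOn ℝ G (Ioo a b) := fun x hx =>
        (hFdiff s x (hsub (Ioo_subset_Icc_self hx))).differentiableWithinAt
      obtain ⟨c, hc, hceq⟩ := exists_deriv_eq_slope G hab hcont hdiff
      have hcmem : c ∈ Icc γl γr := hsub (Ioo_subset_Icc_self hc)
      have hd := hderivbnd s hs hsm c hcmem
      rw [show deriv (fun γ => ∑ i ∈ Finset.range (j + 1),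
        D i γ / Real.sqrt s ^ i) c = deriv G c from rfl, hceq] at hd
      have hba : 0 < b - a := sub_pos.2 hab
      rw [div_le_iff₀ hba] at hd
      have h1 : m/2 * (b - a) ≤ -(G b - G a) := by nlinarith
      calc m/2 * (b - a) ≤ -(G b - G a) := h1
      _ ≤ |G b - G a| := neg_le_abs _
    intro a ha b hb
    rcases lt_trichotomy a b with h | h | h
    · rw [abs_of_pos (sub_pos.2 h)]; exact main a ha b hb h
    · simp [h]
    · rw [abs_of_neg (sub_neg.2 h), abs_sub_comm]
      have hm2 := main b hb a ha h
      calc m/2 * -(b - a) = m/2 * (a - b) := by ring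
      _ ≤ _ := hm2
  -- closeness of the truncated sum to ε at γstar
  have hest : ∀ s : ℕ, 1 ≤ s →
      |(∑ i ∈ Finset.range (j + 1), D i (γstar s) / Real.sqrt s ^ i) - ε|
        ≤ (C + B1) / Real.sqrt s ^ (j+1) := by
    intro s hs
    obtain ⟨hmem, heq, _⟩ := hγstar s hs
    have hmem' : γstar s ∈ Icc γl γr := Ioo_subset_Icc_self hmem
    have happ := happrox s hs (γstar s) hmem'
    rw [Finset.sum_range_succ] at happ
    have hsq1 : (1:ℝ) ≤ Real.sqrt s := by
      rw [show (1:ℝ) = Real.sqrt 1 by simp]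
      exact Real.sqrt_le_sqrt (by exact_mod_cast hs)
    have hsq0 : (0:ℝ) < Real.sqrt s := lt_of_lt_of_le one_pos hsq1
    have hp1 : 0 < Real.sqrt s ^ (j+1) := pow_pos hsq0 _
    have hCle : C / Real.sqrt s ^ (j+2) ≤ C / Real.sqrt s ^ (j+1) :=
      div_le_div_of_nonneg_left hC0 hp1 (pow_le_pow_right₀ hsq1 (by omega))
    have hT : |D (j+1) (γstar s) / Real.sqrt s ^ (j+1)| ≤ B1 / Real.sqrt s ^ (j+1) := by
      rw [abs_div, abs_of_pos hp1]
      gcongr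
      exact hB1 _ hmem'
    have hrewrite : (∑ i ∈ Finset.range (j + 1), D i (γstar s) / Real.sqrt s ^ i) - ε
        = -((Ds s (γstar s) - ((∑ i ∈ Finset.range (j + 1), D i (γstar s) / Real.sqrt s ^ i)
            + D (j+1) (γstar s) / Real.sqrt s ^ (j+1)))
          + D (j+1) (γstar s) / Real.sqrt s ^ (j+1)) := by
      rw [← heq]; ring
    rw [hrewrite, abs_neg]
    calc |(Ds s (γstar s) - ((∑ i ∈ Finset.range (j + 1), D i (γstar s) / Real.sqrt s ^ i)
            + D (j+1) (γstar s) / Real.sqrt s ^ (j+1)))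
          + D (j+1) (γstar s) / Real.sqrt s ^ (j+1)|
        ≤ |Ds s (γstar s) - ((∑ i ∈ Finset.range (j + 1), D i (γstar s) / Real.sqrt s ^ i)
            + D (j+1) (γstar s) / Real.sqrt s ^ (j+1))|
          + |D (j+1) (γstar s) / Real.sqrt s ^ (j+1)| := abs_add_le _ _
    _ ≤ C / Real.sqrt s ^ (j+2) + B1 / Real.sqrt s ^ (j+1) := add_le_add happ hT
    _ ≤ C / Real.sqrt s ^ (j+1) + B1 / Real.sqrt s ^ (j+1) := by linarith
    _ = (C + B1) / Real.sqrt s ^ (j+1) := by ring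
  -- final assembly
  refine ⟨2 * (C + B1) / m, max s1 (max 1 (⌈(2 * (j:ℝ) * B / m)^2⌉₊ + 1)),
    div_nonneg (by linarith) hm0.le,
    le_trans (le_max_left 1 _) (le_max_right s1 _), ?_⟩
  intro s hs
  have hs1 : s1 ≤ s := le_trans (le_max_left _ _) hs
  have hs1' : 1 ≤ s :=
    le_trans (le_trans (le_max_left 1 _) (le_max_right s1 _)) hs
  have hsN : ⌈(2 * (j:ℝ) * B / m)^2⌉₊ + 1 ≤ s :=
    le_trans (le_trans (le_max_right 1 _) (le_max_right s1 _)) hs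
  have hsqge : 2 * (j:ℝ) * B / m ≤ Real.sqrt s := by
    have h1 : ((2 * (j:ℝ) * B / m)^2 : ℝ) ≤ (s:ℝ) := by
      calc (2 * (j:ℝ) * B / m)^2 ≤ (⌈(2 * (j:ℝ) * B / m)^2⌉₊ : ℝ) := Nat.le_ceil _
      _ ≤ s := by exact_mod_cast Nat.le_of_succ_le hsN
    calc 2 * (j:ℝ) * B / m ≤ |2 * (j:ℝ) * B / m| := le_abs_self _
    _ = Real.sqrt ((2 * (j:ℝ) * B / m)^2) := (Real.sqrt_sq_eq_abs _).symm
    _ ≤ Real.sqrt s := Real.sqrt_le_sqrt h1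
  have hjB : (j:ℝ) * B ≤ m/2 * Real.sqrt s := by
    have h2 := mul_le_mul_of_nonneg_left hsqge (le_of_lt (half_pos hm0))
    have heq2 : m/2 * (2 * (j:ℝ) * B / m) = (j:ℝ) * B := by
      field_simp
    linarith
  obtain ⟨hjmem, hjeq, _⟩ := hγj s hs1
  obtain ⟨hsmem, hseq, _⟩ := hγstar s hs1'
  have hsm' : γstar s ∈ Icc γl γr := Ioo_subset_Icc_self hsmem
  have hk := hkey s hs1' hjB (γstar s) hsm' (γj s) hjmem
  rw [hjeq] at hk
  have he := hest s hs1'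
  rw [abs_sub_comm] at he
  have hsq1 : (1:ℝ) ≤ Real.sqrt s := by
    rw [show (1:ℝ) = Real.sqrt 1 by simp]
    exact Real.sqrt_le_sqrt (by exact_mod_cast hs1')
  have hp1 : 0 < Real.sqrt s ^ (j+1) := pow_pos (lt_of_lt_of_le one_pos hsq1) _
  have hfinal : m/2 * |γj s - γstar s| ≤ (C + B1) / Real.sqrt s ^ (j+1) :=
    le_trans hk he
  have h3 : |γj s - γstar s| ≤ (C + B1) / Real.sqrt s ^ (j+1) / (m/2) :=
    (le_div_iff₀ (half_pos hm0)).2 (by rw [mul_comm]; exact hfinal)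
  calc |γj s - γstar s| ≤ (C + B1) / Real.sqrt s ^ (j+1) / (m/2) := h3
  _ = 2 * (C + B1) / m / Real.sqrt s ^ (j+1) := by
      field_simp
end

section
/- There exist an integer s_0 ≥ 1 and a constant C ≥ 0 such that for every integer s ≥ s_0: the function A + E_s has a unique zero γ̄_s in the closed disk {z : |z| ≤ r}, and |γ̄_s + E_s(0)/A′(0)| ≤ C/s. -/
open Metric
open scoped NNReal

set_option maxHeartbeats 1000000 in
/-- First-order refinement: for the perturbed equation `A + E_s = 0` with
`sup |E_s| ≤ c/√s`, the unique root `γ̄_s` in the disk satisfies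
`γ̄_s = −E_s(0)/A′(0) + O(1/s)`. -/
theorem stmt_10 (r : ℝ) (hr : 0 < r) (A : ℂ → ℂ) (U : Set ℂ) (hU : IsOpen U)
    (hUr : closedBall (0 : ℂ) r ⊆ U)
    (hA : AnalyticOnNhd ℂ A U)
    (hA0 : A 0 = 0) (hA'0 : deriv A 0 ≠ 0)
    (hAzero : ∀ z ∈ closedBall (0 : ℂ) r, A z = 0 → z = 0)
    (E : ℕ → ℂ → ℂ) (hE : ∀ s : ℕ, 1 ≤ s → AnalyticOnNhd ℂ (E s) U)
    (c : ℝ)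
    (hEbdd : ∀ s : ℕ, 1 ≤ s → ∀ z ∈ closedBall (0 : ℂ) r,
      ‖E s z‖ ≤ c / Real.sqrt s) :
    ∃ (s0 : ℕ) (C : ℝ), 1 ≤ s0 ∧ 0 ≤ C ∧ ∀ s : ℕ, s0 ≤ s →
      ∃ γbar ∈ closedBall (0 : ℂ) r,
        A γbar + E s γbar = 0 ∧
        (∀ z ∈ closedBall (0 : ℂ) r, A z + E s z = 0 → z = γbar) ∧
        ‖γbar + E s 0 / deriv A 0‖ ≤ C / s := by
  classical
  have h0mem : (0 : ℂ) ∈ closedBall (0 : ℂ) r := mem_closedBall_self hr.le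
  have h0U : (0 : ℂ) ∈ U := hUr h0mem
  set g : ℂ → ℂ := dslope A 0 with hgdef
  have hgA : ∀ z : ℂ, A z = z * g z := by
    intro z
    have h := sub_smul_dslope A 0 z
    simp only [sub_zero, hA0, smul_eq_mul] at h
    exact h.symm
  have hg0 : g 0 = deriv A 0 := dslope_same A 0
  have hganal : AnalyticOnNhd ℂ g U := by
    intro z hz
    rcases eq_or_ne z 0 with rfl | hzne
    · rcases hA 0 h0U with ⟨p, hp⟩
      exact ⟨p.fslope, hp.has_fpower_series_dslope_fslope⟩
    · have h1 : AnalyticAt ℂ (fun w => w⁻¹ * A w) z :=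
        (analyticAt_id.inv hzne).mul (hA z hz)
      refine h1.congr ?_
      filter_upwards [isOpen_ne.mem_nhds hzne] with w hw
      rw [hgdef, dslope_of_ne _ hw, slope_def_field]
      field_simp [hA0]
      rw [hA0]; ring
  have hgne : ∀ z ∈ closedBall (0 : ℂ) r, g z ≠ 0 := by
    intro z hz
    rcases eq_or_ne z 0 with rfl | hzne
    · rw [hg0]; exact hA'0
    · intro h
      exact hzne (hAzero z hz (by rw [hgA z, h, mul_zero]))
  -- minimum of |g| on the closed ball
  have hcomp : IsCompact (closedBall (0 : ℂ) r) := isCompact_closedBall _ _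
  have hgcont : ContinuousOn (fun z => ‖g z‖) (closedBall (0 : ℂ) r) :=
    continuous_norm.comp_continuousOn
      (fun z hz => (hganal z (hUr hz)).continuousAt.continuousWithinAt)
  obtain ⟨z₀, hz₀mem, hz₀min⟩ := hcomp.exists_isMinOn ⟨0, h0mem⟩ hgcont
  set m : ℝ := ‖g z₀‖ with hmdef
  have hm : 0 < m := norm_pos_iff.2 (hgne z₀ hz₀mem)
  have hmle : ∀ z ∈ closedBall (0 : ℂ) r, m ≤ ‖g z‖ := fun z hz => hz₀min hz
  have hc0 : 0 ≤ c := by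
    have h := hEbdd 1 le_rfl 0 h0mem
    have h2 := (norm_nonneg (E 1 0)).trans h
    simpa using h2
  -- the open set where g ≠ 0
  set V : Set ℂ := U ∩ g ⁻¹' {(0 : ℂ)}ᶜ with hVdef
  have hVopen : IsOpen V :=
    ContinuousOn.isOpen_inter_preimage
      (fun z hz => (hganal z hz).continuousAt.continuousWithinAt) hU isOpen_compl_singleton
  have hVsub : closedBall (0 : ℂ) r ⊆ V := fun z hz => ⟨hUr hz, hgne z hz⟩
  -- the fixed point map
  set Φ : ℕ → ℂ → ℂ := fun s z => -(E s z / g z) with hΦdef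
  have hΦanal : ∀ s, 1 ≤ s → AnalyticOnNhd ℂ (Φ s) V := by
    intro s hs z hz
    exact ((hE s hs z hz.1).div (hganal z hz.1) hz.2).neg
  have hΦbdd : ∀ s : ℕ, 1 ≤ s → ∀ z ∈ closedBall (0 : ℂ) r,
      ‖Φ s z‖ ≤ c / Real.sqrt s / m := by
    intro s hs z hz
    have : ‖Φ s z‖ = ‖E s z‖ / ‖g z‖ := by
      simp [hΦdef, norm_div]
    rw [this]
    exact div_le_div₀ (by positivity) (hEbdd s hs z hz) hm (hmle z hz)
  -- Cauchy estimate for the derivative of Φ on the half ball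
  have hderiv : ∀ s : ℕ, 1 ≤ s → ∀ z ∈ closedBall (0 : ℂ) (r / 2),
      ‖deriv (Φ s) z‖ ≤ c / Real.sqrt s / m / (r / 4) := by
    intro s hs z hz
    have hr4 : (0 : ℝ) < r / 4 := by linarith
    have hsub : closedBall z (r / 4) ⊆ closedBall (0 : ℂ) r := by
      intro w hw
      have h1 : dist w z ≤ r / 4 := mem_closedBall.1 hw
      have h2 : dist z 0 ≤ r / 2 := mem_closedBall.1 hz
      have := dist_triangle w z 0
      exact mem_closedBall.2 (by linarith)
    apply Complex.norm_deriv_le_of_forall_mem_sphere_norm_le hr4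
    · apply DifferentiableOn.diffContOnCl
      rw [closure_ball z hr4.ne']
      exact ((hΦanal s hs).differentiableOn).mono (hsub.trans hVsub)
    · intro w hw
      have hw' : w ∈ closedBall (0 : ℂ) r := hsub (sphere_subset_closedBall hw)
      exact hΦbdd s hs w hw'
  -- Lipschitz estimate on the half ball
  have hlip : ∀ s : ℕ, 1 ≤ s → ∀ x ∈ closedBall (0 : ℂ) (r / 2),
      ∀ y ∈ closedBall (0 : ℂ) (r / 2),
      ‖Φ s y - Φ s x‖ ≤ c / Real.sqrt s / m / (r / 4) * ‖y - x‖ := by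
    intro s hs x hx y hy
    refine (convex_closedBall _ _).norm_image_sub_le_of_norm_deriv_le
      (fun w hw => ?_) (hderiv s hs) hx hy
    have hw' : w ∈ V := hVsub (closedBall_subset_closedBall (by linarith) hw)
    exact ((hΦanal s hs) w hw').differentiableAt
  -- choose s0
  set a : ℝ := 8 * c / (m * r) with hadef
  have ha0 : 0 ≤ a := by positivity
  refine ⟨⌈a ^ 2⌉₊ + 1, 4 * c ^ 2 / (m ^ 2 * r), Nat.le_add_left 1 _, by positivity, ?_⟩
  intro s hss0
  have hs1 : 1 ≤ s := le_trans (Nat.le_add_left 1 _) hss0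
  have hsR : (0 : ℝ) < s := by exact_mod_cast hs1
  have hsq0 : 0 < Real.sqrt s := Real.sqrt_pos.2 hsR
  have hsqa : a ≤ Real.sqrt s := by
    rw [show a = Real.sqrt (a ^ 2) by rw [Real.sqrt_sq ha0]]
    apply Real.sqrt_le_sqrt
    calc a ^ 2 ≤ (⌈a ^ 2⌉₊ : ℝ) := Nat.le_ceil _
      _ ≤ (s : ℝ) := by exact_mod_cast Nat.le_of_succ_le hss0
  set δ : ℝ := c / Real.sqrt s / m with hδdef
  have hδ0 : 0 ≤ δ := by positivity
  have hδle : δ ≤ r / 8 := by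
    have h1 : 8 * c ≤ Real.sqrt s * (m * r) := by
      have := (div_le_iff₀ (by positivity : (0:ℝ) < m * r)).1 hsqa
      linarith
    rw [hδdef, div_le_iff₀ hm, div_le_iff₀ hsq0]
    nlinarith
  set K : ℝ := δ / (r / 4) with hKdef
  have hK0 : 0 ≤ K := by positivity
  have hKle : K ≤ 1 / 2 := by
    rw [hKdef, div_le_iff₀ (by linarith : (0:ℝ) < r / 4)]
    nlinarith
  have hhalf : closedBall (0 : ℂ) (r / 2) ⊆ closedBall (0 : ℂ) r :=
    closedBall_subset_closedBall (by linarith)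
  -- maps to
  have hsf : Set.MapsTo (Φ s) (closedBall (0 : ℂ) (r / 2)) (closedBall (0 : ℂ) (r / 2)) := by
    intro z hz
    have := hΦbdd s hs1 z (hhalf hz)
    rw [mem_closedBall_zero_iff]
    calc ‖Φ s z‖ ≤ δ := this
      _ ≤ r / 2 := by linarith
  -- contraction
  have hlips : LipschitzOnWith (1 / 2 : ℝ≥0) (Φ s) (closedBall (0 : ℂ) (r / 2)) := by
    apply LipschitzOnWith.of_dist_le_mul
    intro x hx y hy
    rw [dist_eq_norm, dist_eq_norm]
    calc ‖Φ s x - Φ s y‖ ≤ K * ‖x - y‖ := hlip s hs1 y hy x hx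
      _ ≤ (1 / 2 : ℝ) * ‖x - y‖ := by
          apply mul_le_mul_of_nonneg_right hKle (norm_nonneg _)
      _ = ((1 / 2 : ℝ≥0) : ℝ) * ‖x - y‖ := by norm_num
  have hcontr : ContractingWith (1 / 2 : ℝ≥0) (hsf.restrict (Φ s) _ _) :=
    ⟨one_half_lt_one, hlips.mapsToRestrict hsf⟩
  obtain ⟨γ, hγmem, hγfix, -, -⟩ :=
    hcontr.exists_fixedPoint' (isCompact_closedBall _ _).isComplete hsf
      (mem_closedBall_self (by linarith)) (edist_ne_top _ _)
  have hγr : γ ∈ closedBall (0 : ℂ) r := hhalf hγmem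
  have hγeq : Φ s γ = γ := hγfix
  -- fixed point of Φ ↔ root of A + E s
  have hfix_iff : ∀ z ∈ closedBall (0 : ℂ) r, (Φ s z = z ↔ A z + E s z = 0) := by
    intro z hz
    have hgz := hgne z hz
    simp only [hΦdef]
    constructor
    · intro h
      have : -(E s z) = z * g z := by
        field_simp at h
        linear_combination h
      rw [hgA z, ← this]; ring
    · intro h
      have h2 : E s z = -(z * g z) := by rw [hgA z] at h; linear_combination h
      rw [h2]; field_simp
  have hroot : A γ + E s γ = 0 := (hfix_iff γ hγr).1 hγeq
  -- uniqueness
  have huniq : ∀ z ∈ closedBall (0 : ℂ) r, A z + E s z = 0 → z = γ := by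
    intro z hz hz0
    have hzsmall : z ∈ closedBall (0 : ℂ) (r / 2) := by
      rw [mem_closedBall_zero_iff]
      by_contra hbig
      push_neg at hbig
      have h1 : ‖A z‖ = ‖E s z‖ := by
        have h : A z = -(E s z) := by linear_combination hz0
        rw [h]
        exact norm_neg _
      have h2 : ‖A z‖ ≥ ‖z‖ * m := by
        rw [hgA z, norm_mul]
        exact mul_le_mul_of_nonneg_left (hmle z hz) (norm_nonneg z)
      have h3 : ‖E s z‖ ≤ c / Real.sqrt s := hEbdd s hs1 z hz
      have h4 : c / Real.sqrt s ≤ m * (r / 8) := by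
        have := hδle
        rw [hδdef, div_le_iff₀ hm] at this
        linarith [mul_comm m (r / 8)]
      nlinarith [norm_nonneg z]
    have hzfix : Φ s z = z := (hfix_iff z hz).2 hz0
    have := hlip s hs1 γ hγmem z hzsmall
    rw [hzfix, hγeq] at this
    have hK2 : c / Real.sqrt s / m / (r / 4) * ‖z - γ‖ ≤ (1/2) * ‖z - γ‖ :=
      mul_le_mul_of_nonneg_right hKle (norm_nonneg _)
    have : ‖z - γ‖ ≤ (1/2) * ‖z - γ‖ := le_trans this hK2
    have hzero : ‖z - γ‖ = 0 := by nlinarith [norm_nonneg (z - γ)]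
    have := norm_sub_eq_zero_iff.1 hzero
    exact this
  -- the estimate
  have hγnorm : ‖γ‖ ≤ δ := by
    rw [← hγeq]
    exact hΦbdd s hs1 γ hγr
  have hΦ0 : Φ s 0 = -(E s 0 / deriv A 0) := by rw [hΦdef]; simp [hg0]
  have hest : ‖γ + E s 0 / deriv A 0‖ ≤ K * δ := by
    have h1 := hlip s hs1 0 (mem_closedBall_self (by linarith)) γ hγmem
    rw [hγeq, hΦ0, sub_neg_eq_add, sub_zero] at h1
    calc ‖γ + E s 0 / deriv A 0‖ ≤ K * ‖γ‖ := h1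
      _ ≤ K * δ := mul_le_mul_of_nonneg_left hγnorm hK0
  refine ⟨γ, hγr, hroot, huniq, hest.trans ?_⟩
  have hss : Real.sqrt s * Real.sqrt s = (s : ℝ) := Real.mul_self_sqrt hsR.le
  rw [hKdef, hδdef]
  refine le_of_eq ?_
  rw [← hss]
  field_simp
  rw [Real.sqrt_sq hsq0.le]
end

section
/- For every γ ∈ ℝ with γ ≠ 0, every η > 0, and all reals a, b, d, the limiting revenue rate under threshold admission control satisfies: ( ∫_{−∞}^{0} ((a+d)x + dγ) e^{−x²/2 − γx} dx + ∫_{0}^{η} (−bx + dγ) e^{−γx} dx ) / ( Φ(γ)/φ(γ) + ∫_{0}^{η} e^{−γx} dx ) = dγ − ( (a+d)(1 + γ Φ(γ)/φ(γ)) + b (1 − (1 + γη) e^{−γη})/γ² ) / ( Φ(γ)/φ(γ) + (1 − e^{−γη})/γ ). -/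
open MeasureTheory intervalIntegral

/-- Standard normal cumulative distribution function. -/
noncomputable def stdPhi (γ : ℝ) : ℝ :=
  ∫ u in Set.Iic γ, Real.exp (-u ^ 2 / 2) / Real.sqrt (2 * Real.pi)

/-- Standard normal probability density function. -/
noncomputable def stdphi (γ : ℝ) : ℝ :=
  Real.exp (-γ ^ 2 / 2) / Real.sqrt (2 * Real.pi)

open Filter in
private lemma iic_shift (f : ℝ → ℝ) (γ : ℝ) :
    (∫ x in Set.Iic (0:ℝ), f (x + γ)) = ∫ u in Set.Iic γ, f u := by
  rw [← MeasureTheory.integral_indicator measurableSet_Iic,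
    ← MeasureTheory.integral_indicator measurableSet_Iic,
    ← integral_add_right_eq_self ((Set.Iic γ).indicator f) γ]
  congr 1; funext x
  simp only [Set.indicator_apply, Set.mem_Iic]
  by_cases h : x ≤ 0
  · rw [if_pos h, if_pos (by linarith)]
  · rw [if_neg h, if_neg (by intro hc; exact h (by linarith))]

private lemma int_e (γ : ℝ) : Integrable (fun x : ℝ => Real.exp (-x ^ 2 / 2 - γ * x)) := by
  have h : Integrable (fun x : ℝ => Real.exp (γ^2/2) * Real.exp (-(1/2) * (x + γ)^2)) :=
    ((integrable_exp_neg_mul_sq (by norm_num : (0:ℝ) < 1/2)).comp_add_right γ).const_mul _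
  convert h using 2 with x
  rw [← Real.exp_add]; ring_nf

private lemma int_xe (γ : ℝ) :
    Integrable (fun x : ℝ => (x + γ) * Real.exp (-x ^ 2 / 2 - γ * x)) := by
  have h : Integrable
      (fun x : ℝ => Real.exp (γ^2/2) * ((x + γ) * Real.exp (-(1/2) * (x + γ)^2))) :=
    ((integrable_mul_exp_neg_mul_sq (by norm_num : (0:ℝ) < 1/2)).comp_add_right γ).const_mul _
  convert h using 2 with x
  rw [mul_comm (Real.exp _), mul_assoc, ← Real.exp_add]; ring_nf

private lemma hderiv_e (γ x : ℝ) :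
    HasDerivAt (fun x : ℝ => -Real.exp (-x ^ 2 / 2 - γ * x))
      ((x + γ) * Real.exp (-x ^ 2 / 2 - γ * x)) x := by
  have h : HasDerivAt (fun x : ℝ => -x ^ 2 / 2 - γ * x) (-x - γ) x := by
    simp only [neg_div]
    have := ((hasDerivAt_pow 2 x).div_const 2).neg.sub ((hasDerivAt_id x).const_mul γ)
    simp only [id] at this
    refine this.congr_deriv ?_
    push_cast; ring
  have h2 := (h.exp).neg
  exact h2.congr_deriv (by ring)

open Filter in
private lemma tendsto_e (γ : ℝ) :
    Tendsto (fun x : ℝ => -Real.exp (-x ^ 2 / 2 - γ * x)) atBot (nhds 0) := by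
  rw [← neg_zero]
  apply Tendsto.neg
  rw [Real.tendsto_exp_comp_nhds_zero]
  have h2 : Tendsto (fun x : ℝ => -x / 2 - γ) atBot atTop :=
    tendsto_atTop_add_const_right _ _ (tendsto_neg_atBot_atTop.atTop_div_const two_pos)
  have h1 : Tendsto (fun x : ℝ => x * (-x / 2 - γ)) atBot atBot :=
    Tendsto.atBot_mul_atTop₀ tendsto_id h2
  exact h1.congr fun x => by ring

private lemma I1 (γ : ℝ) :
    (∫ x in Set.Iic (0:ℝ), Real.exp (-x ^ 2 / 2 - γ * x)) = stdPhi γ / stdphi γ := by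
  have key : (∫ x in Set.Iic (0:ℝ), Real.exp (-x ^ 2 / 2 - γ * x))
      = Real.exp (γ ^ 2 / 2) * ∫ x in Set.Iic (0:ℝ), Real.exp (-(x + γ) ^ 2 / 2) := by
    rw [← MeasureTheory.integral_const_mul]
    congr 1; funext x
    rw [← Real.exp_add]; ring_nf
  have shift := iic_shift (fun u => Real.exp (-u ^ 2 / 2)) γ
  rw [key, shift]
  have hs : Real.sqrt (2 * Real.pi) ≠ 0 :=
    ne_of_gt (Real.sqrt_pos.mpr (by positivity))
  have he : Real.exp (-γ ^ 2 / 2) ≠ 0 := Real.exp_ne_zero _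
  rw [stdPhi, stdphi, MeasureTheory.integral_div]
  rw [div_div_div_cancel_right₀ hs, eq_div_iff he, mul_comm (Real.exp (γ ^ 2 / 2)),
    mul_assoc, ← Real.exp_add]
  simp [neg_div, Real.exp_zero]

private lemma I2 (γ : ℝ) :
    (∫ x in Set.Iic (0:ℝ), (x + γ) * Real.exp (-x ^ 2 / 2 - γ * x)) = -1 := by
  have := integral_Iic_of_hasDerivAt_of_tendsto' (a := (0:ℝ))
    (f := fun x : ℝ => -Real.exp (-x ^ 2 / 2 - γ * x))
    (f' := fun x : ℝ => (x + γ) * Real.exp (-x ^ 2 / 2 - γ * x))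
    (fun x _ => hderiv_e γ x) (int_xe γ).integrableOn (tendsto_e γ)
  simpa using this

private lemma J1 (γ η : ℝ) (hγ : γ ≠ 0) :
    (∫ x in (0:ℝ)..η, Real.exp (-γ * x)) = (1 - Real.exp (-γ * η)) / γ := by
  have hderiv : ∀ x ∈ Set.uIcc (0:ℝ) η,
      HasDerivAt (fun x : ℝ => -Real.exp (-γ * x) / γ) (Real.exp (-γ * x)) x := by
    intro x _
    have h : HasDerivAt (fun x : ℝ => -γ * x) (-γ) x := by
      simpa using (hasDerivAt_id x).const_mul (-γ)
    have h2 := (h.exp).neg.div_const γ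
    exact h2.congr_deriv (by field_simp)
  rw [integral_eq_sub_of_hasDerivAt hderiv
    ((Real.continuous_exp.comp (continuous_const.mul continuous_id)).intervalIntegrable 0 η)]
  field_simp
  simp only [mul_zero, neg_zero, Real.exp_zero]; ring

private lemma J2 (γ η b d : ℝ) (hγ : γ ≠ 0) :
    (∫ x in (0:ℝ)..η, (-b * x + d * γ) * Real.exp (-γ * x))
      = Real.exp (-γ * η) * (b * η / γ + b / γ ^ 2 - d) - (b / γ ^ 2 - d) := by
  have hderiv : ∀ x ∈ Set.uIcc (0:ℝ) η,
      HasDerivAt (fun x : ℝ => Real.exp (-γ * x) * (b * x / γ + b / γ ^ 2 - d))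
        ((-b * x + d * γ) * Real.exp (-γ * x)) x := by
    intro x _
    have h : HasDerivAt (fun x : ℝ => -γ * x) (-γ) x := by
      simpa using (hasDerivAt_id x).const_mul (-γ)
    have hg : HasDerivAt (fun x : ℝ => b * x / γ + b / γ ^ 2 - d) (b / γ) x := by
      have h3 := ((((hasDerivAt_id x).const_mul b).div_const γ).add_const (b / γ ^ 2)).sub_const d
      exact h3.congr_deriv (by simp)
    have h2 := (h.exp).mul hg
    exact h2.congr_deriv (by field_simp; ring)
  rw [integral_eq_sub_of_hasDerivAt hderiv]
  · simp
  · apply Continuous.intervalIntegrable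
    continuity

private lemma stdPhi_pos (γ : ℝ) : 0 < stdPhi γ := by
  have hint : IntegrableOn (fun u : ℝ => Real.exp (-u ^ 2 / 2) / Real.sqrt (2 * Real.pi))
      (Set.Iic γ) := by
    have h : Integrable (fun u : ℝ => Real.exp (-u ^ 2 / 2) / Real.sqrt (2 * Real.pi)) := by
      have := (int_e 0).div_const (Real.sqrt (2 * Real.pi))
      simpa using this
    exact h.integrableOn
  rw [stdPhi]
  rw [setIntegral_pos_iff_support_of_nonneg_ae ?_ hint]
  · have hsup : Function.support (fun u : ℝ => Real.exp (-u ^ 2 / 2) / Real.sqrt (2 * Real.pi))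
        = Set.univ := by
      ext u; simp only [Function.mem_support, Set.mem_univ, iff_true]
      positivity
    rw [hsup, Set.univ_inter, Real.volume_Iic]
    simp
  · filter_upwards with u
    positivity

private lemma stdphi_pos (γ : ℝ) : 0 < stdphi γ := by
  rw [stdphi]; positivity

/-- Closed form of the limiting revenue rate under threshold admission control
(equation (10) of the paper). -/
theorem stmt_19 (γ : ℝ) (hγ : γ ≠ 0) (η : ℝ) (hη : 0 < η) (a b d : ℝ) :
    ((∫ x in Set.Iic (0 : ℝ), ((a + d) * x + d * γ) * Real.exp (-x ^ 2 / 2 - γ * x))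
        + ∫ x in (0 : ℝ)..η, (-b * x + d * γ) * Real.exp (-γ * x))
      / (stdPhi γ / stdphi γ + ∫ x in (0 : ℝ)..η, Real.exp (-γ * x))
    = d * γ
      - ((a + d) * (1 + γ * (stdPhi γ / stdphi γ))
          + b * (1 - (1 + γ * η) * Real.exp (-γ * η)) / γ ^ 2)
        / (stdPhi γ / stdphi γ + (1 - Real.exp (-γ * η)) / γ) := by
  set T := stdPhi γ / stdphi γ with hT
  set E := Real.exp (-γ * η) with hE
  have hEpos : 0 < E := Real.exp_pos _
  have hTpos : 0 < T := div_pos (stdPhi_pos γ) (stdphi_pos γ)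
  have hSpos : 0 < (1 - E) / γ := by
    rcases lt_or_gt_of_ne hγ with h | h
    · apply div_pos_of_neg_of_neg _ h
      have : (1:ℝ) < E := by
        rw [hE, ← Real.exp_zero, Real.exp_lt_exp]
        nlinarith
      linarith
    · apply div_pos _ h
      have : E < 1 := by
        rw [hE, ← Real.exp_zero, Real.exp_lt_exp]
        nlinarith
      linarith
  have hD : T + (1 - E) / γ ≠ 0 := by positivity
  have hfirst : (∫ x in Set.Iic (0 : ℝ), ((a + d) * x + d * γ) * Real.exp (-x ^ 2 / 2 - γ * x))
      = (a + d) * (-1) + (-(a * γ)) * T := by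
    have hsplit : (∫ x in Set.Iic (0 : ℝ), ((a + d) * x + d * γ) * Real.exp (-x ^ 2 / 2 - γ * x))
        = ∫ x in Set.Iic (0 : ℝ),
            ((a + d) * ((x + γ) * Real.exp (-x ^ 2 / 2 - γ * x))
              + (-(a * γ)) * Real.exp (-x ^ 2 / 2 - γ * x)) := by
      congr 1; funext x; ring
    rw [hsplit, integral_add (((int_xe γ).integrableOn).const_mul _)
      (((int_e γ).integrableOn).const_mul _), MeasureTheory.integral_const_mul,
      MeasureTheory.integral_const_mul, I1, I2, hT]
  rw [hfirst, J1 γ η hγ, J2 γ η b d hγ, ← hE]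
  rw [div_eq_iff hD, sub_mul, div_mul_cancel₀ _ hD]
  field_simp
  ring
end
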